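/- In a finite simple graph with m edges, for any constant k ≥ 2 the sum over all vertices u of |Γ⁺(u)|^{k−1} is at most 2^{k-2}·m^{k/2}. -/

import Mathlib

/-- The degree-based total order: `x ≺ y` iff `d(x) < d(y)`, or `d(x) = d(y)` and `x < y`. -/
def degPrec {V : Type*} [Fintype V] [LinearOrder V] (G : SimpleGraph V)
    [DecidableRel G.Adj] (x y : V) : Prop :=
  G.degree x < G.degree y ∨ (G.degree x = G.degree y ∧ x < y)

instance {V : Type*} [Fintype V] [LinearOrder V] (G : SimpleGraph V)
    [DecidableRel G.Adj] (x y : V) : Decidable (degPrec G x y) := by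
  unfold degPrec; infer_instance

/-- The high neighborhood `Γ⁺(u)`: neighbors of `u` that are larger under `≺`. -/
def gammaPlus {V : Type*} [Fintype V] [LinearOrder V] (G : SimpleGraph V)
    [DecidableRel G.Adj] (u : V) : Finset V :=
  (G.neighborFinset u).filter (fun x => degPrec G u x)

lemma degPrec_asymm {V : Type*} [Fintype V] [LinearOrder V] (G : SimpleGraph V)
    [DecidableRel G.Adj] {x y : V} (h1 : degPrec G x y) (h2 : degPrec G y x) : False := by
  rcases h1 with h1 | ⟨h1, h1'⟩ <;> rcases h2 with h2 | ⟨h2, h2'⟩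
  · omega
  · omega
  · omega
  · exact absurd (h1'.trans h2') (lt_irrefl x)

lemma sq_card_le {V : Type*} [Fintype V] [LinearOrder V] (G : SimpleGraph V)
    [DecidableRel G.Adj] (u : V) :
    (gammaPlus G u).card ^ 2 ≤ 2 * G.edgeFinset.card := by
  have hsub : gammaPlus G u ⊆ G.neighborFinset u := Finset.filter_subset _ _
  have hdu : (gammaPlus G u).card ≤ G.degree u := by
    rw [← G.card_neighborFinset_eq_degree]; exact Finset.card_le_card hsub
  have hdeg : ∀ v ∈ gammaPlus G u, (gammaPlus G u).card ≤ G.degree v := by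
    intro v hv
    have := (Finset.mem_filter.mp hv).2
    rcases this with h | ⟨h, _⟩ <;> omega
  calc (gammaPlus G u).card ^ 2 = (gammaPlus G u).card * (gammaPlus G u).card := sq _
    _ ≤ ∑ v ∈ gammaPlus G u, G.degree v := by
        calc (gammaPlus G u).card * (gammaPlus G u).card
            = ∑ _v ∈ gammaPlus G u, (gammaPlus G u).card := by rw [Finset.sum_const, smul_eq_mul]
          _ ≤ _ := Finset.sum_le_sum hdeg
    _ ≤ ∑ v : V, G.degree v := Finset.sum_le_sum_of_subset (Finset.subset_univ _)
    _ = 2 * G.edgeFinset.card := by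
        rw [SimpleGraph.sum_degrees_eq_twice_card_edges]

lemma sum_card_le {V : Type*} [Fintype V] [LinearOrder V] (G : SimpleGraph V)
    [DecidableRel G.Adj] :
    ∑ u : V, (gammaPlus G u).card ≤ G.edgeFinset.card := by
  rw [← Finset.card_sigma]
  apply Finset.card_le_card_of_injOn (fun p => s(p.1, p.2))
  · intro p hp
    rw [Finset.mem_coe, Finset.mem_sigma] at hp
    have := (Finset.mem_filter.mp hp.2).1
    rw [SimpleGraph.mem_neighborFinset] at this
    simpa [SimpleGraph.mem_edgeFinset, SimpleGraph.mem_edgeSet] using this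
  · intro p hp q hq hpq
    rw [Finset.mem_coe, Finset.mem_sigma] at hp hq
    have hp2 := (Finset.mem_filter.mp hp.2).2
    have hq2 := (Finset.mem_filter.mp hq.2).2
    simp only [Sym2.eq, Sym2.rel_iff', Prod.mk.injEq, Prod.swap_prod_mk] at hpq
    rcases hpq with ⟨h1, h2⟩ | ⟨h1, h2⟩
    · exact Sigma.ext h1 (heq_of_eq h2)
    · rw [h1, h2] at hp2
      exact absurd hq2 (fun h => degPrec_asymm G hp2 h)

/-- `∑_u |Γ⁺(u)|^{k-1} ≤ 2^{k-2}·m^{k/2}` for `k ≥ 2`. -/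
theorem stmt5 {V : Type*} [Fintype V] [LinearOrder V] (G : SimpleGraph V)
    [DecidableRel G.Adj] (k : ℕ) (hk : 2 ≤ k) :
    (∑ u : V, ((gammaPlus G u).card : ℝ) ^ (k - 1))
      ≤ 2 ^ (k - 2) * (G.edgeFinset.card : ℝ) ^ ((k : ℝ) / 2) := by
  set m : ℝ := (G.edgeFinset.card : ℝ) with hm
  have hm0 : (0:ℝ) ≤ m := Nat.cast_nonneg _
  have hc : ∀ u : V, ((gammaPlus G u).card : ℝ) ≤ 2 * Real.sqrt m := by
    intro u
    have h2 : ((gammaPlus G u).card : ℝ) ^ 2 ≤ 2 * m := by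
      rw [hm]; exact_mod_cast sq_card_le G u
    have h4 : ((gammaPlus G u).card : ℝ) ^ 2 ≤ (2 * Real.sqrt m) ^ 2 := by
      rw [mul_pow, Real.sq_sqrt hm0]; nlinarith
    calc ((gammaPlus G u).card : ℝ) = Real.sqrt (((gammaPlus G u).card : ℝ) ^ 2) := by
          rw [Real.sqrt_sq (by positivity)]
      _ ≤ Real.sqrt ((2 * Real.sqrt m) ^ 2) := Real.sqrt_le_sqrt h4
      _ = 2 * Real.sqrt m := Real.sqrt_sq (by positivity)
  have hsum : ∑ u : V, ((gammaPlus G u).card : ℝ) ≤ m := by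
    rw [hm]; exact_mod_cast sum_card_le G
  have hk1 : k - 1 = (k - 2) + 1 := by omega
  calc (∑ u : V, ((gammaPlus G u).card : ℝ) ^ (k - 1))
      = ∑ u : V, ((gammaPlus G u).card : ℝ) ^ (k - 2) * ((gammaPlus G u).card : ℝ) := by
        simp [hk1, pow_succ]
    _ ≤ ∑ u : V, (2 * Real.sqrt m) ^ (k - 2) * ((gammaPlus G u).card : ℝ) := by
        refine Finset.sum_le_sum fun u _ => ?_
        exact mul_le_mul_of_nonneg_right
          (pow_le_pow_left₀ (Nat.cast_nonneg _) (hc u) _) (Nat.cast_nonneg _)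
    _ = (2 * Real.sqrt m) ^ (k - 2) * ∑ u : V, ((gammaPlus G u).card : ℝ) := by
        rw [Finset.mul_sum]
    _ ≤ (2 * Real.sqrt m) ^ (k - 2) * m :=
        mul_le_mul_of_nonneg_left hsum (by positivity)
    _ ≤ 2 ^ (k - 2) * m ^ ((k : ℝ) / 2) := by
        rcases eq_or_lt_of_le hm0 with h0 | hpos
        · rw [← h0]
          simp
          positivity
        · rw [mul_pow, Real.sqrt_eq_rpow, ← Real.rpow_natCast (m ^ ((1:ℝ)/2)) (k-2),
            ← Real.rpow_mul hm0, mul_assoc]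
          gcongr
          refine le_of_eq ?_
          have hcast : ((k - 2 : ℕ) : ℝ) = (k : ℝ) - 2 := by
            push_cast [Nat.cast_sub hk]; ring
          calc m ^ ((1:ℝ)/2 * ((k - 2 : ℕ) : ℝ)) * m
              = m ^ ((1:ℝ)/2 * ((k:ℝ) - 2)) * m ^ (1:ℝ) := by rw [hcast, Real.rpow_one]
            _ = m ^ ((1:ℝ)/2 * ((k:ℝ) - 2) + 1) := (Real.rpow_add hpos _ _).symm
            _ = m ^ ((k:ℝ)/2) := by congr 1; ring
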